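/- Let G=(V,E) be a directed graph and r a total ranking (injective function) on V. For any two vertices u,v with a path from u to v, among all shortest paths from u to v, pick one containing a vertex w of maximum rank; then the subpath from u to w is a shortest path from u to w in which every internal vertex has rank less than max(r(u),r(w)), and similarly the subpath from w to v is a shortest path from w to v in which every internal vertex has rank less than max(r(w),r(v)). -/

import Mathlib

def IsPath {V : Type*} (E : V → V → Prop) (p : List V) (u v : V) : Prop :=
  List.Chain' E p ∧ p.head? = some u ∧ p.getLast? = some v

def IsShortestPath {V : Type*} (E : V → V → Prop) (p : List V) (u v : V) : Prop :=
  IsPath E p u v ∧ ∀ q : List V, IsPath E q u v → p.length ≤ q.length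

def Trough {V : Type*} (r : V → ℕ) (p : List V) (u v : V) : Prop :=
  ∀ x ∈ (p.drop 1).dropLast, r x < max (r u) (r v)

noncomputable def GDist {V : Type*} (E : V → V → Prop) (u v : V) : ℕ∞ :=
  sInf { n : ℕ∞ | ∃ p : List V, IsPath E p u v ∧ n = ((p.length - 1 : ℕ) : ℕ∞) }

private lemma path_skip {V : Type*} (E : V → V → Prop) {u v x : V} {a b c : List V}
    (h : IsPath E (a ++ x :: (b ++ x :: c)) u v) : IsPath E (a ++ x :: c) u v := by
  obtain ⟨hc, hh, hl⟩ := h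
  rw [List.Chain', List.isChain_append] at hc
  obtain ⟨hca, hcr, hedge⟩ := hc
  have hcr2 : List.Chain' E (x :: c) := by
    have h2 : List.Chain' E ((x :: b) ++ (x :: c)) := by simpa [List.Chain'] using hcr
    exact (List.isChain_append.1 h2).2.1
  refine ⟨?_, ?_, ?_⟩
  · rw [List.Chain', List.isChain_append]
    refine ⟨hca, hcr2, ?_⟩
    intro y hy z hz
    simp only [List.head?_cons, Option.mem_def, Option.some.injEq] at hz
    subst hz
    exact hedge y hy x (by simp)
  · have heq : (a ++ x :: c).head? = (a ++ x :: (b ++ x :: c)).head? := by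
      cases a <;> simp
    rw [heq]; exact hh
  · rw [List.getLast?_append_cons]
    have : a ++ x :: (b ++ x :: c) = (a ++ x :: b) ++ x :: c := by simp
    rw [this, List.getLast?_append_cons] at hl
    exact hl

private lemma ne_nil_of_head? {V : Type*} {l : List V} {a : V} (h : l.head? = some a) :
    l ≠ [] := by
  intro hn; subst hn; simp at h

theorem stmt0 {V : Type*} (E : V → V → Prop) (r : V → ℕ)
    (hr : Function.Injective r) (u v : V)
    (h : ∃ p : List V, IsPath E p u v) :
    ∃ (p : List V) (w : V) (p1 p2 : List V),
      IsShortestPath E p u v ∧ w ∈ p ∧ (∀ x ∈ p, r x ≤ r w) ∧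
      p = p1 ++ p2.tail ∧
      IsShortestPath E p1 u w ∧ Trough r p1 u w ∧
      IsShortestPath E p2 w v ∧ Trough r p2 w v := by
  classical
  obtain ⟨p0, hp0⟩ := h
  set S : Set ℕ := {n | ∃ q : List V, IsPath E q u v ∧ q.length = n} with hSdef
  have hS : S.Nonempty := ⟨p0.length, p0, hp0, rfl⟩
  obtain ⟨p, hp, hplen⟩ := Nat.sInf_mem hS
  have hmin : ∀ q, IsPath E q u v → p.length ≤ q.length := by
    intro q hq
    rw [hplen]
    exact Nat.sInf_le ⟨q, hq, rfl⟩
  have hpshort : IsShortestPath E p u v := ⟨hp, hmin⟩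
  have hpne : p ≠ [] := ne_nil_of_head? hp.2.1
  obtain ⟨w, hw⟩ : ∃ w, w ∈ p.argmax r := by
    rcases ho : p.argmax r with _ | w
    · exact absurd (List.argmax_eq_none.1 ho) hpne
    · exact ⟨w, rfl⟩
  have hwmem : w ∈ p := List.argmax_mem hw
  have hwmax : ∀ x ∈ p, r x ≤ r w := fun x hx => List.le_of_mem_argmax hx hw
  obtain ⟨a, c, hpac⟩ := List.append_of_mem hwmem
  have hp' : IsPath E (a ++ w :: c) u v := hpac ▸ hp
  have hplen' : p.length = a.length + 1 + c.length := by rw [hpac]; simp; omega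
  -- w occurs only once
  have hwa : w ∉ a := by
    intro hin
    obtain ⟨a1, a2, ha⟩ := List.append_of_mem hin
    have hpath : IsPath E (a1 ++ w :: c) u v := by
      refine path_skip E (b := a2) ?_
      have : a ++ w :: c = a1 ++ w :: (a2 ++ w :: c) := by rw [ha]; simp
      rw [← this]; exact hp'
    have hle := hmin _ hpath
    rw [hplen', ha] at hle
    simp at hle; omega
  have hwc : w ∉ c := by
    intro hin
    obtain ⟨c1, c2, hc⟩ := List.append_of_mem hin
    have hpath : IsPath E (a ++ w :: c2) u v := by
      refine path_skip E (b := c1) ?_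
      rw [← hc]; exact hp'
    have hle := hmin _ hpath
    rw [hplen', hc] at hle
    simp at hle; omega
  obtain ⟨hchain, hhead, hlast⟩ := hp'
  rw [List.Chain', List.isChain_append] at hchain
  obtain ⟨hchain_a, hchain_wc, hedge⟩ := hchain
  have hchain_c : List.Chain' E c := (List.isChain_cons.1 hchain_wc).2
  have hedge_c : ∀ y ∈ c.head?, E w y := (List.isChain_cons.1 hchain_wc).1
  have hlast_wc : (w :: c).getLast? = some v := by
    rw [← List.getLast?_append_cons a w c]; exact hlast
  -- p1 = a ++ [w] is a path from u to w
  have hp1path : IsPath E (a ++ [w]) u w := by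
    refine ⟨?_, ?_, ?_⟩
    · rw [List.Chain', List.isChain_append]
      refine ⟨hchain_a, List.isChain_singleton w, ?_⟩
      intro y hy z hz
      simp only [List.head?_cons, Option.mem_def, Option.some.injEq] at hz
      subst hz
      exact hedge y hy w (by simp)
    · have heq : (a ++ [w]).head? = (a ++ w :: c).head? := by cases a <;> simp
      rw [heq]; exact hhead
    · rw [List.getLast?_append_cons]; rfl
  -- p2 = w :: c is a path from w to v
  have hp2path : IsPath E (w :: c) w v := ⟨hchain_wc, rfl, hlast_wc⟩
  refine ⟨p, w, a ++ [w], w :: c, hpshort, hwmem, hwmax, ?_, ⟨hp1path, ?_⟩, ?_, ⟨hp2path, ?_⟩, ?_⟩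
  · rw [hpac]; simp
  · -- shortestness of p1
    intro q hq
    have hqne : q ≠ [] := ne_nil_of_head? hq.2.1
    have hqpath : IsPath E (q ++ c) u v := by
      refine ⟨?_, ?_, ?_⟩
      · rw [List.Chain', List.isChain_append]
        refine ⟨hq.1, hchain_c, ?_⟩
        intro y hy z hz
        rw [hq.2.2] at hy
        simp only [Option.mem_def, Option.some.injEq] at hy
        subst hy
        exact hedge_c z hz
      · have heq : (q ++ c).head? = q.head? := by
          cases q with
          | nil => exact absurd rfl hqne
          | cons x t => simp
        rw [heq]; exact hq.2.1
      · cases hc : c with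
        | nil =>
          have hvw : v = w := by
            rw [hc] at hlast_wc
            simpa using hlast_wc.symm
          rw [List.append_nil, hq.2.2, hvw]
        | cons x t =>
          rw [List.getLast?_append_of_ne_nil q (by simp)]
          rw [hc] at hlast_wc
          rwa [List.getLast?_cons_cons] at hlast_wc
    have hle := hmin _ hqpath
    rw [hplen'] at hle
    simp only [List.length_append] at hle ⊢
    simp; omega
  · -- Trough p1
    intro x hx
    cases a with
    | nil => simp at hx
    | cons y t =>
      have hxt : x ∈ t := by
        simpa [List.dropLast_concat] using hx
      have hxa : x ∈ y :: t := List.mem_cons_of_mem y hxt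
      have hxp : x ∈ p := by rw [hpac]; exact List.mem_append_left _ hxa
      have hne : x ≠ w := fun hxw => hwa (hxw ▸ hxa)
      have hlt : r x < r w := lt_of_le_of_ne (hwmax x hxp) (fun he => hne (hr he))
      exact lt_of_lt_of_le hlt (le_max_right _ _)
  · -- shortestness of p2
    intro q hq
    have hqne : q ≠ [] := ne_nil_of_head? hq.2.1
    have hqpath : IsPath E (a ++ q) u v := by
      refine ⟨?_, ?_, ?_⟩
      · rw [List.Chain', List.isChain_append]
        refine ⟨hchain_a, hq.1, ?_⟩
        intro y hy z hz
        rw [hq.2.1] at hz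
        simp only [Option.mem_def, Option.some.injEq] at hz
        subst hz
        exact hedge y hy w (by simp)
      · have heq : (a ++ q).head? = (a ++ w :: c).head? := by
          cases a with
          | nil =>
            simp only [List.nil_append]
            rw [hq.2.1]; rfl
          | cons y t => simp
        rw [heq]; exact hhead
      · rw [List.getLast?_append_of_ne_nil a hqne]; exact hq.2.2
    have hle := hmin _ hqpath
    rw [hplen'] at hle
    simp only [List.length_append, List.length_cons] at hle ⊢
    omega
  · -- Trough p2
    intro x hx
    simp only [List.drop_one, List.tail_cons] at hx
    have hxc : x ∈ c := List.dropLast_sublist c |>.mem hx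
    have hxp : x ∈ p := by rw [hpac]; exact List.mem_append_right _ (List.mem_cons_of_mem w hxc)
    have hne : x ≠ w := fun hxw => hwc (hxw ▸ hxc)
    have hlt : r x < r w := lt_of_le_of_ne (hwmax x hxp) (fun he => hne (hr he))
    exact lt_of_lt_of_le hlt (le_max_left _ _)
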